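/- Let (λₙ)_{n≥1} be a summable sequence of nonnegative reals and let s ≤ 0 be real. For y ∈ ℝ define θ(y) := ∑_{n≥1} arctan(−2yλₙ / (1 − 2sλₙ)), which converges absolutely. Then: (i) θ is nonincreasing on ℝ, and strictly decreasing if λₙ > 0 for at least one n; (ii) if the set {n : λₙ > 0} is finite with cardinality N, then θ(y) → −Nπ/2 as y → +∞ and θ(y) → Nπ/2 as y → −∞; (iii) if the set {n : λₙ > 0} is infinite, then θ(y) → −∞ as y → +∞ and θ(y) → +∞ as y → −∞. -/
import Mathlib


open Filter Topology

/-- The function `θ(y) := ∑_{n} arctan (−2yλₙ / (1 − 2sλₙ))`. -/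
noncomputable def thetaFun (lam : ℕ → ℝ) (s : ℝ) (y : ℝ) : ℝ :=
  ∑' n, Real.arctan (-2 * y * lam n / (1 - 2 * s * lam n))



lemma arctan_nonneg' {x : ℝ} (hx : 0 ≤ x) : 0 ≤ Real.arctan x := by
  rw [← Real.arctan_zero]; exact Real.arctan_strictMono.monotone hx

lemma abs_arctan_le (x : ℝ) : |Real.arctan x| ≤ |x| := by
  have key : ∀ t : ℝ, 0 ≤ t → Real.arctan t ≤ t := by
    intro t ht
    have h1 : Real.arctan t ≤ Real.tan (Real.arctan t) :=
      Real.le_tan (arctan_nonneg' ht) (Real.arctan_lt_pi_div_two t)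
    rwa [Real.tan_arctan] at h1
  rcases le_or_gt 0 x with hx | hx
  · rw [abs_of_nonneg hx, abs_of_nonneg (arctan_nonneg' hx)]
    exact key x hx
  · rw [abs_of_neg hx, abs_of_neg (by rw [← Real.arctan_zero]; exact Real.arctan_strictMono hx),
      ← Real.arctan_neg]
    exact key (-x) (by linarith)

section helpers
variable {lam : ℕ → ℝ} {s : ℝ}

lemma denom_ge (hnn : ∀ n, 0 ≤ lam n) (hs : s ≤ 0) (n : ℕ) :
    (1:ℝ) ≤ 1 - 2 * s * lam n := by nlinarith [hnn n]

lemma summable_abs_theta (hnn : ∀ n, 0 ≤ lam n) (hsum : Summable lam) (hs : s ≤ 0) (y : ℝ) :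
    Summable (fun n => |Real.arctan (-2 * y * lam n / (1 - 2 * s * lam n))|) := by
  apply Summable.of_nonneg_of_le (fun n => abs_nonneg _) _ (hsum.mul_left (2 * |y|))
  intro n
  have hd := denom_ge hnn hs n
  calc |Real.arctan (-2 * y * lam n / (1 - 2 * s * lam n))|
      ≤ |(-2 * y * lam n) / (1 - 2 * s * lam n)| := abs_arctan_le _
    _ = |(-2 * y * lam n)| / (1 - 2 * s * lam n) := by
        rw [abs_div, abs_of_pos (show (0:ℝ) < 1 - 2 * s * lam n by linarith)]
    _ ≤ |(-2 * y * lam n)| := div_le_self (abs_nonneg _) hd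
    _ = 2 * |y| * lam n := by
        rw [abs_mul, abs_mul, abs_neg, abs_two, abs_of_nonneg (hnn n)]

lemma summable_theta (hnn : ∀ n, 0 ≤ lam n) (hsum : Summable lam) (hs : s ≤ 0) (y : ℝ) :
    Summable (fun n => Real.arctan (-2 * y * lam n / (1 - 2 * s * lam n))) :=
  (summable_abs_theta hnn hsum hs y).of_abs

lemma term_le (hnn : ∀ n, 0 ≤ lam n) (hs : s ≤ 0) {y₁ y₂ : ℝ} (h : y₁ ≤ y₂) (n : ℕ) :
    Real.arctan (-2 * y₂ * lam n / (1 - 2 * s * lam n))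
      ≤ Real.arctan (-2 * y₁ * lam n / (1 - 2 * s * lam n)) := by
  have hd := denom_ge hnn hs n
  apply Real.arctan_strictMono.monotone
  exact div_le_div_of_nonneg_right
    (by nlinarith [mul_nonneg (hnn n) (sub_nonneg.mpr h)]) (by linarith)

lemma term_lt (hnn : ∀ n, 0 ≤ lam n) (hs : s ≤ 0) {y₁ y₂ : ℝ} (h : y₁ < y₂) {n : ℕ}
    (hn : 0 < lam n) :
    Real.arctan (-2 * y₂ * lam n / (1 - 2 * s * lam n))
      < Real.arctan (-2 * y₁ * lam n / (1 - 2 * s * lam n)) := by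
  have hd := denom_ge hnn hs n
  apply Real.arctan_strictMono
  apply (div_lt_div_iff_of_pos_right (show (0:ℝ) < 1 - 2 * s * lam n by linarith)).mpr
  nlinarith

lemma theta_neg (lam : ℕ → ℝ) (s y : ℝ) : thetaFun lam s (-y) = -thetaFun lam s y := by
  unfold thetaFun
  rw [← tsum_neg]
  congr 1
  funext n
  rw [← Real.arctan_neg]
  congr 1
  ring

lemma term_tendsto (hnn : ∀ n, 0 ≤ lam n) (hs : s ≤ 0) {n : ℕ} (hn : 0 < lam n) :
    Tendsto (fun y : ℝ => Real.arctan (-2 * y * lam n / (1 - 2 * s * lam n))) atTop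
      (𝓝 (-(Real.pi / 2))) := by
  have hd := denom_ge hnn hs n
  have hneg : -2 * lam n / (1 - 2 * s * lam n) < 0 :=
    div_neg_of_neg_of_pos (by linarith) (by linarith)
  have hlin : Tendsto (fun y : ℝ => (-2 * lam n / (1 - 2 * s * lam n)) * y) atTop atBot :=
    (tendsto_const_mul_atBot_of_neg hneg).mpr tendsto_id
  have := (Real.tendsto_arctan_atBot.mono_right nhdsWithin_le_nhds).comp hlin
  refine this.congr fun y => ?_
  simp only [Function.comp]
  congr 1
  ring

lemma theta_eq_sum (hnn : ∀ n, 0 ≤ lam n) (hfin : {n : ℕ | 0 < lam n}.Finite) (y : ℝ) :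
    thetaFun lam s y
      = ∑ n ∈ hfin.toFinset, Real.arctan (-2 * y * lam n / (1 - 2 * s * lam n)) := by
  apply tsum_eq_sum
  intro n hn
  have h0 : lam n = 0 := by
    by_contra h
    exact hn (hfin.mem_toFinset.mpr (lt_of_le_of_ne (hnn n) (Ne.symm h)))
  simp [h0]

lemma sum_tendsto (hnn : ∀ n, 0 ≤ lam n) (hs : s ≤ 0) (F : Finset ℕ)
    (hF : ∀ n ∈ F, 0 < lam n) :
    Tendsto (fun y : ℝ => ∑ n ∈ F, Real.arctan (-2 * y * lam n / (1 - 2 * s * lam n)))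
      atTop (𝓝 (-(F.card : ℝ) * Real.pi / 2)) := by
  have h := tendsto_finset_sum F (fun n hn => term_tendsto hnn hs (hF n hn))
  have hval : ∑ _n ∈ F, (-(Real.pi / 2)) = -(F.card : ℝ) * Real.pi / 2 := by
    rw [Finset.sum_const, nsmul_eq_mul]; ring
  rwa [hval] at h

end helpers

/-- For a summable sequence `(λₙ)` of nonnegative reals and `s ≤ 0`,
the series defining `θ` converges absolutely; `θ` is nonincreasing, strictly decreasing
if some `λₙ > 0`; if `{n : λₙ > 0}` is finite of cardinality `N` then
`θ(y) → ∓Nπ/2` as `y → ±∞`; if it is infinite then `θ(y) → ∓∞` as `y → ±∞`. -/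
theorem stmt6 (lam : ℕ → ℝ) (hnn : ∀ n, 0 ≤ lam n) (hsum : Summable lam)
    (s : ℝ) (hs : s ≤ 0) :
    (∀ y : ℝ, Summable (fun n => |Real.arctan (-2 * y * lam n / (1 - 2 * s * lam n))|)) ∧
    Antitone (thetaFun lam s) ∧
    ((∃ n, 0 < lam n) → StrictAnti (thetaFun lam s)) ∧
    (∀ hfin : {n : ℕ | 0 < lam n}.Finite,
      Tendsto (thetaFun lam s) atTop
        (𝓝 (-(hfin.toFinset.card : ℝ) * Real.pi / 2)) ∧
      Tendsto (thetaFun lam s) atBot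
        (𝓝 ((hfin.toFinset.card : ℝ) * Real.pi / 2))) ∧
    ({n : ℕ | 0 < lam n}.Infinite →
      Tendsto (thetaFun lam s) atTop atBot ∧
      Tendsto (thetaFun lam s) atBot atTop) := by
  have hodd : ∀ y : ℝ, thetaFun lam s y = -thetaFun lam s (-y) := by
    intro y; rw [theta_neg]; ring
  refine ⟨summable_abs_theta hnn hsum hs, ?_, ?_, ?_, ?_⟩
  · intro y₁ y₂ h
    exact Summable.tsum_le_tsum (term_le hnn hs h) (summable_theta hnn hsum hs y₂)
      (summable_theta hnn hsum hs y₁)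
  · rintro ⟨m, hm⟩ y₁ y₂ h
    exact Summable.tsum_lt_tsum (term_le hnn hs h.le) (term_lt hnn hs h hm)
      (summable_theta hnn hsum hs y₂) (summable_theta hnn hsum hs y₁)
  · intro hfin
    have htop : Tendsto (thetaFun lam s) atTop
        (𝓝 (-(hfin.toFinset.card : ℝ) * Real.pi / 2)) := by
      refine Tendsto.congr (fun y => (theta_eq_sum hnn hfin y).symm) ?_
      exact sum_tendsto hnn hs hfin.toFinset (fun n hn => hfin.mem_toFinset.mp hn)
    refine ⟨htop, ?_⟩
    have h1 : Tendsto (fun y : ℝ => thetaFun lam s (-y)) atBot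
        (𝓝 (-(hfin.toFinset.card : ℝ) * Real.pi / 2)) :=
      htop.comp tendsto_neg_atBot_atTop
    have h2 := h1.neg
    have heq : ((hfin.toFinset.card : ℝ) * Real.pi / 2)
        = -(-(hfin.toFinset.card : ℝ) * Real.pi / 2) := by ring
    rw [heq]
    exact h2.congr fun y => (hodd y).symm
  · intro hinf
    have htop : Tendsto (thetaFun lam s) atTop atBot := by
      rw [tendsto_atBot]
      intro b
      obtain ⟨k, hk⟩ := exists_nat_ge (1 - b)
      obtain ⟨t, hts, htf, htc⟩ := hinf.exists_subset_ncard_eq k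
      set F := htf.toFinset with hFdef
      have hcard : F.card = k := by
        rw [← Set.ncard_eq_toFinset_card t htf]; exact htc
      have hmem : ∀ n ∈ F, 0 < lam n := fun n hn => hts (htf.mem_toFinset.mp hn)
      have hlim := sum_tendsto hnn hs F hmem
      have hπ := Real.two_le_pi
      have hev1 := hlim.eventually_lt_const
        (show -(F.card : ℝ) * Real.pi / 2 < -(k : ℝ) + 1 by
          rw [hcard]
          nlinarith [Nat.cast_nonneg (α := ℝ) k])
      filter_upwards [hev1, eventually_ge_atTop (0:ℝ)] with y h1 h2
      have hnp : ∀ n, Real.arctan (-2 * y * lam n / (1 - 2 * s * lam n)) ≤ 0 := by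
        intro n
        have hd := denom_ge hnn hs n
        have hx : -2 * y * lam n / (1 - 2 * s * lam n) ≤ 0 :=
          div_nonpos_of_nonpos_of_nonneg (by nlinarith [mul_nonneg h2 (hnn n)])
            (by linarith)
        calc Real.arctan (-2 * y * lam n / (1 - 2 * s * lam n))
            ≤ Real.arctan 0 := Real.arctan_strictMono.monotone hx
          _ = 0 := Real.arctan_zero
      have hst := Summable.sum_le_tsum F (fun n _ => neg_nonneg.mpr (hnp n))
        ((summable_theta hnn hsum hs y).neg)
      rw [tsum_neg, Finset.sum_neg_distrib] at hst
      have hle : thetaFun lam s y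
          ≤ ∑ n ∈ F, Real.arctan (-2 * y * lam n / (1 - 2 * s * lam n)) := by
        have : -(∑ n ∈ F, Real.arctan (-2 * y * lam n / (1 - 2 * s * lam n)))
            ≤ -thetaFun lam s y := hst
        linarith
      linarith
    refine ⟨htop, ?_⟩
    have h1 : Tendsto (fun y : ℝ => thetaFun lam s (-y)) atBot atBot :=
      htop.comp tendsto_neg_atBot_atTop
    have h2 := tendsto_neg_atBot_atTop.comp h1
    exact h2.congr fun y => (hodd y).symm
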